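/- Suppose F₁, F₂ : [0,T) → ℝ are differentiable, satisfy F₁' + F₁F₂ = 0 and F₂' - F₁F₂ = 0, F₁(0) > 0 and F₂(0) < 0 with F₁(0) + F₂(0) ≠ 0. Let A = F₁(0) + F₂(0) and B = (ln F₁(0) - ln(-F₂(0)))/A. Then for t in the interval of existence, F₁(t) = A·exp(AB)/(exp(AB) - exp(At)), and F₁(t) + F₂(t) = A for all t. -/

import Mathlib

open Set Real

/-- For the system `F₁' + F₁F₂ = 0`, `F₂' - F₁F₂ = 0` with `F₁ 0 > 0 > F₂ 0`,
`A := F₁ 0 + F₂ 0 ≠ 0` and `B := (ln F₁(0) - ln(-F₂(0)))/A`, we have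
`F₁ t = A e^{AB}/(e^{AB} - e^{At})` and `F₁ + F₂ ≡ A`. -/
theorem stmt_2 (T : ℝ) (hT : 0 < T) (F₁ F₂ : ℝ → ℝ)
    (h₁ : ∀ t ∈ Ico (0:ℝ) T, HasDerivAt F₁ (-(F₁ t * F₂ t)) t)
    (h₂ : ∀ t ∈ Ico (0:ℝ) T, HasDerivAt F₂ (F₁ t * F₂ t) t)
    (hF₁0 : 0 < F₁ 0) (hF₂0 : F₂ 0 < 0) (hA : F₁ 0 + F₂ 0 ≠ 0) :
    ∀ t ∈ Ico (0:ℝ) T,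
      (F₁ t = (F₁ 0 + F₂ 0) * exp ((F₁ 0 + F₂ 0) *
          ((log (F₁ 0) - log (-F₂ 0)) / (F₁ 0 + F₂ 0))) /
        (exp ((F₁ 0 + F₂ 0) * ((log (F₁ 0) - log (-F₂ 0)) / (F₁ 0 + F₂ 0))) -
          exp ((F₁ 0 + F₂ 0) * t))) ∧
      F₁ t + F₂ t = F₁ 0 + F₂ 0 := by
  set A : ℝ := F₁ 0 + F₂ 0 with hAdef
  have hc₁ : ∀ x ∈ Ico (0:ℝ) T, ContinuousAt F₁ x := fun x hx => (h₁ x hx).continuousAt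
  have hc₂ : ∀ x ∈ Ico (0:ℝ) T, ContinuousAt F₂ x := fun x hx => (h₂ x hx).continuousAt
  have hsub : ∀ s ∈ Ico (0:ℝ) T, Icc (0:ℝ) s ⊆ Ico (0:ℝ) T := fun s hs x hx =>
    ⟨hx.1, lt_of_le_of_lt hx.2 hs.2⟩
  -- Step 1 : F₁ + F₂ is constant
  have hS : ∀ s ∈ Ico (0:ℝ) T, F₁ s + F₂ s = A := by
    intro s hs
    have hcont : ContinuousOn (fun x => F₁ x + F₂ x) (Icc 0 s) := fun x hx =>
      (((hc₁ x (hsub s hs hx)).add (hc₂ x (hsub s hs hx))).continuousWithinAt)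
    have hder : ∀ x ∈ Ico (0:ℝ) s, HasDerivWithinAt (fun x => F₁ x + F₂ x) 0 (Ici x) x := by
      intro x hx
      have hx' : x ∈ Ico (0:ℝ) T := ⟨hx.1, hx.2.trans hs.2⟩
      have := ((h₁ x hx').add (h₂ x hx')).hasDerivWithinAt (s := Ici x)
      exact this.congr_deriv (by ring)
    have := constant_of_has_deriv_right_zero hcont hder s (right_mem_Icc.2 hs.1)
    simpa using this
  -- the primitive of F₁
  set G : ℝ → ℝ := fun x => ∫ u in (0:ℝ)..x, F₁ u with hGdef
  have hF₁contOn : ContinuousOn F₁ (Ico 0 T) := fun x hx => (hc₁ x hx).continuousWithinAt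
  have hGint : ∀ x ∈ Ico (0:ℝ) T, IntervalIntegrable F₁ MeasureTheory.volume 0 x := by
    intro x hx
    apply ContinuousOn.intervalIntegrable
    rw [uIcc_of_le hx.1]
    exact hF₁contOn.mono (hsub x hx)
  have hmemIoi : ∀ x ∈ Ico (0:ℝ) T, Ico (0:ℝ) T ∈ nhdsWithin x (Ioi x) := by
    intro x hx
    refine mem_nhdsWithin.2 ⟨Iio T, isOpen_Iio, hx.2, ?_⟩
    rintro y ⟨hy1, hy2⟩
    exact ⟨(hx.1.trans_lt hy2).le, hy1⟩
  have hG : ∀ x ∈ Ico (0:ℝ) T, HasDerivWithinAt G (F₁ x) (Ici x) x := by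
    intro x hx
    exact intervalIntegral.integral_hasDerivWithinAt_right (hGint x hx)
      ⟨Ico 0 T, hmemIoi x hx, (hF₁contOn.aestronglyMeasurable measurableSet_Ico)⟩
      (hc₁ x hx).continuousWithinAt
  -- constants
  set k : ℝ := -F₂ 0 / F₁ 0 with hkdef
  set χ : ℝ → ℝ := fun x => F₂ x + k * exp (A * x) * F₁ x with hχdef
  have hχder : ∀ x ∈ Ico (0:ℝ) T, HasDerivAt χ (F₁ x * χ x) x := by
    intro x hx
    have he : HasDerivAt (fun x : ℝ => exp (A * x)) (exp (A * x) * A) x := by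
      simpa using ((hasDerivAt_id x).const_mul A).exp
    have hd : HasDerivAt χ
        (F₁ x * F₂ x + (k * (exp (A * x) * A) * F₁ x + k * exp (A * x) * -(F₁ x * F₂ x))) x :=
      (h₂ x hx).add (((he.const_mul k).mul (h₁ x hx)))
    have hAx : F₂ x = A - F₁ x := by have := hS x hx; linarith
    convert hd using 1
    simp only [hχdef]
    rw [hAx]; ring
  -- Step 2 : χ vanishes identically
  have hχ0 : χ 0 = 0 := by
    simp only [hχdef, hkdef, mul_zero, exp_zero, one_mul]
    field_simp
    ring
  have hχzero : ∀ s ∈ Ico (0:ℝ) T, χ s = 0 := by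
    intro s hs
    have hcontχ : ContinuousOn χ (Icc 0 s) := fun x hx =>
      ((hχder x (hsub s hs hx)).continuousAt).continuousWithinAt
    have hcontG : ContinuousOn G (Icc 0 s) := by
      have : ContinuousOn (fun x => ∫ u in (0:ℝ)..x, F₁ u) (uIcc 0 s) := by
        apply intervalIntegral.continuousOn_primitive_interval
        rw [uIcc_of_le hs.1]
        exact (hF₁contOn.mono (hsub s hs)).integrableOn_compact isCompact_Icc
      rwa [uIcc_of_le hs.1] at this
    have hcontη : ContinuousOn (fun x => χ x * exp (-(G x))) (Icc 0 s) :=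
      hcontχ.mul (hcontG.neg.rexp)
    have hderη : ∀ x ∈ Ico (0:ℝ) s,
        HasDerivWithinAt (fun x => χ x * exp (-(G x))) 0 (Ici x) x := by
      intro x hx
      have hx' : x ∈ Ico (0:ℝ) T := ⟨hx.1, hx.2.trans hs.2⟩
      have hGe : HasDerivWithinAt (fun x => exp (-(G x))) (exp (-(G x)) * -(F₁ x)) (Ici x) x :=
        ((hG x hx').neg).exp
      have := ((hχder x hx').hasDerivWithinAt (s := Ici x)).mul hGe
      exact this.congr_deriv (by ring)
    have := constant_of_has_deriv_right_zero hcontη hderη s (right_mem_Icc.2 hs.1)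
    have hG0 : G 0 = 0 := by simp [hGdef]
    rw [hχ0, hG0] at this
    simpa [exp_ne_zero] using this
  -- conclusion
  intro t ht
  refine ⟨?_, hS t ht⟩
  have hχt := hχzero t ht
  have hSt := hS t ht
  -- F₂ t = -k * exp (A t) * F₁ t
  have hF₂t : F₂ t = -(k * exp (A * t) * F₁ t) :=
    eq_neg_of_add_eq_zero_left (by simpa [hχdef] using hχt)
  have hkey : F₁ t * (1 - k * exp (A * t)) = A := by
    have h' := hSt
    rw [hF₂t] at h'
    linear_combination h'
  have hfac : (1 : ℝ) - k * exp (A * t) ≠ 0 := by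
    intro h
    rw [h, mul_zero] at hkey
    exact hA hkey.symm
  have hF₂0' : (-F₂ 0) ≠ 0 := by linarith
  have hF₁0' : F₁ 0 ≠ 0 := ne_of_gt hF₁0
  have hAB : A * ((log (F₁ 0) - log (-F₂ 0)) / A) = log (F₁ 0) - log (-F₂ 0) := by
    field_simp
  have hexpAB : exp (A * ((log (F₁ 0) - log (-F₂ 0)) / A)) = F₁ 0 / (-F₂ 0) := by
    rw [hAB, exp_sub, exp_log hF₁0, exp_log (by linarith)]
  have hkinv : k * (F₁ 0 / (-F₂ 0)) = 1 := by
    rw [hkdef]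
    field_simp
    exact div_self (ne_of_lt hF₂0)
  have hF₁t : F₁ t = A / (1 - k * exp (A * t)) := by
    rw [eq_div_iff hfac]; exact hkey
  have hne2 : F₁ 0 / (-F₂ 0) - exp (A * t) ≠ 0 := by
    intro h
    apply hfac
    have h' : F₁ 0 / (-F₂ 0) = exp (A * t) := sub_eq_zero.mp h
    have h2 : k * exp (A * t) = 1 := by rw [← h']; exact hkinv
    rw [h2]; ring
  rw [hexpAB, hF₁t, div_eq_div_iff hfac hne2]
  have : A * (F₁ 0 / (-F₂ 0)) * (k * exp (A * t)) = A * exp (A * t) * (k * (F₁ 0 / (-F₂ 0))) := by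
    ring
  rw [hkinv] at this
  nlinarith [this]
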